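/- In the acceleration projected IDM, suppose the leader has the trajectory x_l(t) = x_l0 + v_l0·t + (1/2)·u·t² with u ≥ 0 and v_l0 > 0. Then for all t ∈ [0,T] the gap satisfies x_l(t) − x(t) − l ≤ (x_l0 − x₀ − l) + (v_l0 − v₀)·t + (1/2)·(u + a_min)·t². Consequently, if the follower's initial velocity v₀ is sufficiently large (in particular if v₀ > v_l0 and (v₀ − v_l0)² > 2·(u + a_min)·(x_l0 − x₀ − l)), there exists a time t > 0 with x_l(t) − x(t) < l, i.e. the model allows the follower to overtake the leader. -/

import Mathlib

open Set

/-- The IDM acceleration function. -/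
noncomputable def IDMAcc (a b vfree τ s₀ l δ : ℝ) (x v xl vl : ℝ) : ℝ :=
  a * (1 - (|v| / vfree) ^ δ -
    ((2 * Real.sqrt (a * b) * (s₀ + v * τ) + v * (v - vl)) /
      (2 * Real.sqrt (a * b) * (xl - x - l))) ^ 2)

lemma mono_of_deriv_aux {T : ℝ} (f f' : ℝ → ℝ)
    (hf : ∀ t ∈ Icc (0:ℝ) T, HasDerivAt f (f' t) t)
    (h0 : ∀ t ∈ Ioo (0:ℝ) T, 0 ≤ f' t) : MonotoneOn f (Icc (0:ℝ) T) := by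
  apply monotoneOn_of_deriv_nonneg (convex_Icc 0 T)
  · exact fun t ht => (hf t ht).continuousAt.continuousWithinAt
  · rw [interior_Icc]
    exact fun t ht =>
      (hf t (Ioo_subset_Icc_self ht)).differentiableAt.differentiableWithinAt
  · rw [interior_Icc]
    intro t ht
    rw [(hf t (Ioo_subset_Icc_self ht)).deriv]
    exact h0 t ht

/-- **Physical unreasonability of the acceleration projected IDM.**
Against the leader trajectory `x_l(t) = x_l0 + v_l0 t + (u/2) t²` (with
`u ≥ 0`, `v_l0 > 0`), the gap of the acceleration projected IDM satisfies
`x_l(t) − x(t) − l ≤ (x_l0 − x₀ − l) + (v_l0 − v₀) t + ½ (u + a_min) t²`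
on `[0,T]`; consequently, for `v₀` sufficiently large (if `v₀ > v_l0`,
`(v₀ − v_l0)² > 2 (u + a_min)(x_l0 − x₀ − l)` and the critical time
`(v₀ − v_l0)/(u + a_min)` lies in the horizon) there is a time `t > 0`
with `x_l(t) − x(t) < l`: the follower overtakes the leader. -/
theorem apidm_overtaking
    (T a b vfree s₀ l δ τ amin u : ℝ) (x₀ xl₀ v₀ vl₀ : ℝ) (x v : ℝ → ℝ)
    (hT : 0 < T) (ha : 0 < a) (hb : 0 < b) (hvf : 0 < vfree)
    (hs₀ : 0 < s₀) (hl : 0 < l) (hτ : τ ∈ Ioo 0 T) (hδ : 1 < δ)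
    (hamin : 0 < amin) (hu : 0 ≤ u) (hvl₀ : 0 < vl₀)
    (hx0 : x 0 = x₀) (hv0 : v 0 = v₀) (hv₀ : 0 ≤ v₀)
    (hx : ∀ t ∈ Icc (0:ℝ) T, HasDerivAt x (max (v t) 0) t)
    (hv : ∀ t ∈ Icc (0:ℝ) T,
      HasDerivAt v
        (max (IDMAcc a b vfree τ s₀ l δ (x t) (max (v t) 0)
            (xl₀ + vl₀ * t + u / 2 * t ^ 2) (vl₀ + u * t)) (-amin)) t) :
    (∀ t ∈ Icc (0:ℝ) T,
      (xl₀ + vl₀ * t + u / 2 * t ^ 2) - x t - l ≤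
        (xl₀ - x₀ - l) + (vl₀ - v₀) * t + (1 / 2) * (u + amin) * t ^ 2) ∧
    (vl₀ < v₀ → 2 * (u + amin) * (xl₀ - x₀ - l) < (v₀ - vl₀) ^ 2 →
      (v₀ - vl₀) / (u + amin) ≤ T →
      ∃ t ∈ Ioc (0:ℝ) T, (xl₀ + vl₀ * t + u / 2 * t ^ 2) - x t < l) := by
  -- velocity lower bound
  have hmono_v : MonotoneOn (fun t => v t + amin * t) (Icc (0:ℝ) T) := by
    apply mono_of_deriv_aux _
      (fun t => max (IDMAcc a b vfree τ s₀ l δ (x t) (max (v t) 0)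
            (xl₀ + vl₀ * t + u / 2 * t ^ 2) (vl₀ + u * t)) (-amin) + amin)
    · intro t ht
      have h := (hv t ht).add ((hasDerivAt_id t).const_mul amin)
      simp only [mul_one] at h
      exact h
    · intro t ht
      have := le_max_right (IDMAcc a b vfree τ s₀ l δ (x t) (max (v t) 0)
            (xl₀ + vl₀ * t + u / 2 * t ^ 2) (vl₀ + u * t)) (-amin)
      linarith
  have vlb : ∀ t ∈ Icc (0:ℝ) T, v₀ - amin * t ≤ v t := by
    intro t ht
    have h0 : (0:ℝ) ∈ Icc (0:ℝ) T := ⟨le_refl 0, le_of_lt hT⟩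
    have := hmono_v h0 ht ht.1
    simp only [hv0, mul_zero, add_zero] at this
    linarith
  -- position lower bound
  have hmono_x : MonotoneOn (fun t => x t + amin / 2 * t ^ 2 - v₀ * t) (Icc (0:ℝ) T) := by
    apply mono_of_deriv_aux _ (fun t => max (v t) 0 + amin * t - v₀)
    · intro t ht
      have h1 : HasDerivAt (fun t : ℝ => amin / 2 * t ^ 2) (amin * t) t := by
        have h := (hasDerivAt_pow 2 t).const_mul (amin / 2)
        simp only [Nat.cast_ofNat, pow_one] at h
        convert h using 1
        · rfl
        · rfl
        · norm_num
          ring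
      have h2 : HasDerivAt (fun t : ℝ => v₀ * t) v₀ t := by
        simpa using (hasDerivAt_id t).const_mul v₀
      exact ((hx t ht).add h1).sub h2
    · intro t ht
      have h1 := vlb t (Ioo_subset_Icc_self ht)
      have h2 : v t ≤ max (v t) 0 := le_max_left _ _
      linarith
  have xlb : ∀ t ∈ Icc (0:ℝ) T, x₀ + v₀ * t - amin / 2 * t ^ 2 ≤ x t := by
    intro t ht
    have h0 : (0:ℝ) ∈ Icc (0:ℝ) T := ⟨le_refl 0, le_of_lt hT⟩
    have := hmono_x h0 ht ht.1
    simp only [hx0] at this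
    nlinarith [this]
  constructor
  · intro t ht
    have := xlb t ht
    nlinarith
  · intro h1 h2 h3
    have hup : 0 < u + amin := by linarith
    set t := (v₀ - vl₀) / (u + amin) with hts
    have ht0 : 0 < t := div_pos (by linarith) hup
    have htmem : t ∈ Icc (0:ℝ) T := ⟨le_of_lt ht0, h3⟩
    have hcanc : t * (u + amin) = v₀ - vl₀ := div_mul_cancel₀ _ (ne_of_gt hup)
    have hbd := xlb t htmem
    refine ⟨t, ⟨ht0, h3⟩, ?_⟩
    nlinarith [sq_nonneg t, mul_pos hup hup]
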